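/- Let f₀ be quasihomogeneous of type (d; w₁,...,wₙ) with all wᵢ > 0. If f = f₀ + f₁ is semiquasihomogeneous (deg f₁ > d) and φ is an automorphism of ℂ{x} of degree ≥ 0, then φ(f) is again semiquasihomogeneous of degree d, and its principal part (sum of terms of weighted degree d) equals φ₀(f₀), where φ₀ is the quasihomogeneous part of φ; in particular if φ has degree > 0 then the principal part of φ(f) equals f₀. -/

import Mathlib

open MvPowerSeries

/-- Weighted order of a multivariate power series (⊤ for the zero series). -/
noncomputable def wOrd {n : ℕ} (w : Fin n → ℕ) (g : MvPowerSeries (Fin n) ℂ) : ℕ∞ :=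
  sInf {m : ℕ∞ | ∃ α : Fin n →₀ ℕ, MvPowerSeries.coeff α g ≠ 0 ∧ m = (∑ i, w i * α i : ℕ)}

/-- The part of weighted degree exactly `e` of a power series. -/
noncomputable def ppart {n : ℕ} (w : Fin n → ℕ) (e : ℕ) (g : MvPowerSeries (Fin n) ℂ) :
    MvPowerSeries (Fin n) ℂ :=
  fun α => if ∑ i, w i * α i = e then MvPowerSeries.coeff α g else 0

namespace SQHAux

variable {n : ℕ} {w : Fin n → ℕ}

/-- weighted degree of an exponent -/
def Wt (w : Fin n → ℕ) (α : Fin n →₀ ℕ) : ℕ := ∑ i, w i * α i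

/-- "weighted order ≥ e" predicate -/
def Q (w : Fin n → ℕ) (e : ℕ) (g : MvPowerSeries (Fin n) ℂ) : Prop :=
  ∀ α : Fin n →₀ ℕ, Wt w α < e → MvPowerSeries.coeff α g = 0

/-- "quasihomogeneous of degree exactly e" predicate -/
def Hh (w : Fin n → ℕ) (e : ℕ) (g : MvPowerSeries (Fin n) ℂ) : Prop :=
  ∀ α : Fin n →₀ ℕ, Wt w α ≠ e → MvPowerSeries.coeff α g = 0

lemma Wt_add (α β : Fin n →₀ ℕ) : Wt w (α + β) = Wt w α + Wt w β := by
  simp [Wt, Finsupp.add_apply, mul_add, Finset.sum_add_distrib]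

lemma Wt_single (w : Fin n → ℕ) (i : Fin n) : Wt w (Finsupp.single i 1) = w i := by
  simp [Wt, Finsupp.single_apply]

lemma Q_mono {e e' : ℕ} (h : e' ≤ e) {g} (hg : Q w e g) : Q w e' g :=
  fun α hα => hg α (lt_of_lt_of_le hα h)

lemma Q_zero (e : ℕ) : Q w e (0 : MvPowerSeries (Fin n) ℂ) := fun _ _ => by simp

lemma Q_zero' (g : MvPowerSeries (Fin n) ℂ) : Q w 0 g := fun α hα => absurd hα (Nat.not_lt_zero _)

lemma Q_add {e : ℕ} {g h : MvPowerSeries (Fin n) ℂ} (hg : Q w e g) (hh : Q w e h) :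
    Q w e (g + h) := fun α hα => by rw [map_add, hg α hα, hh α hα, add_zero]

lemma Q_sum {e : ℕ} {ι : Type*} {s : Finset ι} {F : ι → MvPowerSeries (Fin n) ℂ}
    (h : ∀ b ∈ s, Q w e (F b)) : Q w e (∑ b ∈ s, F b) := fun α hα => by
  rw [map_sum]
  exact Finset.sum_eq_zero fun b hb => h b hb α hα

lemma Q_mul {a b : ℕ} {g h : MvPowerSeries (Fin n) ℂ} (hg : Q w a g) (hh : Q w b h) :
    Q w (a + b) (g * h) := by
  intro α hα
  rw [MvPowerSeries.coeff_mul]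
  apply Finset.sum_eq_zero
  rintro ⟨u, v⟩ huv
  have huv' : u + v = α := Finset.HasAntidiagonal.mem_antidiagonal.mp huv
  have hW : Wt w u + Wt w v < a + b := by rw [← Wt_add, huv']; exact hα
  by_cases hu : Wt w u < a
  · rw [hg u hu, zero_mul]
  · have : Wt w v < b := by omega
    rw [hh v this, mul_zero]

lemma Q_mul_left {a : ℕ} {g h : MvPowerSeries (Fin n) ℂ} (hg : Q w a g) :
    Q w a (g * h) := by
  have := Q_mul hg (Q_zero' h)
  simpa using this

lemma Q_pow {a : ℕ} {g : MvPowerSeries (Fin n) ℂ} (hg : Q w a g) (k : ℕ) :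
    Q w (a * k) (g ^ k) := by
  induction k with
  | zero => simpa using Q_zero' (1 : MvPowerSeries (Fin n) ℂ)
  | succ k ih =>
      have : g ^ (k + 1) = g ^ k * g := pow_succ g k
      rw [this, Nat.mul_succ]
      exact Q_mul ih hg

lemma Q_prod {ι : Type*} {s : Finset ι} {a : ι → ℕ} {g : ι → MvPowerSeries (Fin n) ℂ}
    (h : ∀ i ∈ s, Q w (a i) (g i)) :
    Q w (∑ i ∈ s, a i) (∏ i ∈ s, g i) := by
  induction s using Finset.cons_induction with
  | empty => simpa using Q_zero' (1 : MvPowerSeries (Fin n) ℂ)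
  | cons i s hi ih =>
      rw [Finset.prod_cons, Finset.sum_cons]
      exact Q_mul (h i (Finset.mem_cons_self i s)) (ih fun j hj => h j (Finset.mem_cons_of_mem hj))

lemma Q_pow_sub {a : ℕ} {g g' : MvPowerSeries (Fin n) ℂ} (hg : Q w a g) (hg' : Q w a g')
    (hd : Q w (a + 1) (g - g')) (k : ℕ) :
    Q w (a * k + 1) (g ^ k - g' ^ k) := by
  induction k with
  | zero => simpa using Q_zero (w := w) 1
  | succ k ih =>
      have hE : g ^ (k + 1) - g' ^ (k + 1) = (g - g') * g ^ k + g' * (g ^ k - g' ^ k) := by ring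
      rw [hE]
      have h1 : Q w ((a + 1) + a * k) ((g - g') * g ^ k) := Q_mul hd (Q_pow hg k)
      have h2 : Q w (a + (a * k + 1)) (g' * (g ^ k - g' ^ k)) := Q_mul hg' ih
      have e1 : a * (k + 1) + 1 ≤ (a + 1) + a * k := by rw [Nat.mul_succ]; omega
      have e2 : a * (k + 1) + 1 ≤ a + (a * k + 1) := by rw [Nat.mul_succ]; omega
      exact Q_add (Q_mono e1 h1) (Q_mono e2 h2)

lemma Q_prod_sub {ι : Type*} {s : Finset ι} {a : ι → ℕ} {g g' : ι → MvPowerSeries (Fin n) ℂ}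
    (h : ∀ i ∈ s, Q w (a i) (g i)) (h' : ∀ i ∈ s, Q w (a i) (g' i))
    (hd : ∀ i ∈ s, Q w (a i + 1) (g i - g' i)) :
    Q w ((∑ i ∈ s, a i) + 1) (∏ i ∈ s, g i - ∏ i ∈ s, g' i) := by
  induction s using Finset.cons_induction with
  | empty => simpa using Q_zero (w := w) 1
  | cons i s hi ih =>
      rw [Finset.prod_cons, Finset.prod_cons, Finset.sum_cons]
      have hE : g i * ∏ j ∈ s, g j - g' i * ∏ j ∈ s, g' j
          = (g i - g' i) * ∏ j ∈ s, g j + g' i * (∏ j ∈ s, g j - ∏ j ∈ s, g' j) := by ring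
      rw [hE]
      have h1 : Q w ((a i + 1) + ∑ j ∈ s, a j) ((g i - g' i) * ∏ j ∈ s, g j) :=
        Q_mul (hd i (Finset.mem_cons_self i s))
          (Q_prod fun j hj => h j (Finset.mem_cons_of_mem hj))
      have h2 : Q w (a i + ((∑ j ∈ s, a j) + 1)) (g' i * (∏ j ∈ s, g j - ∏ j ∈ s, g' j)) :=
        Q_mul (h' i (Finset.mem_cons_self i s))
          (ih (fun j hj => h j (Finset.mem_cons_of_mem hj))
              (fun j hj => h' j (Finset.mem_cons_of_mem hj))
              (fun j hj => hd j (Finset.mem_cons_of_mem hj)))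
      exact Q_add (Q_mono (by omega) h1) (Q_mono (by omega) h2)

lemma Hh_add {e : ℕ} {g h : MvPowerSeries (Fin n) ℂ} (hg : Hh w e g) (hh : Hh w e h) :
    Hh w e (g + h) := fun α hα => by rw [map_add, hg α hα, hh α hα, add_zero]

lemma Hh_sum {e : ℕ} {ι : Type*} {s : Finset ι} {F : ι → MvPowerSeries (Fin n) ℂ}
    (h : ∀ b ∈ s, Hh w e (F b)) : Hh w e (∑ b ∈ s, F b) := fun α hα => by
  rw [map_sum]
  exact Finset.sum_eq_zero fun b hb => h b hb α hα

lemma Hh_mul {a b : ℕ} {g h : MvPowerSeries (Fin n) ℂ} (hg : Hh w a g) (hh : Hh w b h) :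
    Hh w (a + b) (g * h) := by
  intro α hα
  rw [MvPowerSeries.coeff_mul]
  apply Finset.sum_eq_zero
  rintro ⟨u, v⟩ huv
  have huv' : u + v = α := Finset.HasAntidiagonal.mem_antidiagonal.mp huv
  by_cases hu : Wt w u = a
  · by_cases hv : Wt w v = b
    · exfalso; apply hα; rw [← huv', Wt_add, hu, hv]
    · rw [hh v hv, mul_zero]
  · rw [hg u hu, zero_mul]

lemma Hh_one : Hh w 0 (1 : MvPowerSeries (Fin n) ℂ) := by
  intro α hα
  rw [MvPowerSeries.coeff_one, if_neg]
  intro h0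
  exact hα (by simp [h0, Wt])

lemma Hh_pow {a : ℕ} {g : MvPowerSeries (Fin n) ℂ} (hg : Hh w a g) (k : ℕ) :
    Hh w (a * k) (g ^ k) := by
  induction k with
  | zero => simpa using Hh_one
  | succ k ih =>
      rw [pow_succ, Nat.mul_succ]
      exact Hh_mul ih hg

lemma Hh_prod {ι : Type*} {s : Finset ι} {a : ι → ℕ} {g : ι → MvPowerSeries (Fin n) ℂ}
    (h : ∀ i ∈ s, Hh w (a i) (g i)) :
    Hh w (∑ i ∈ s, a i) (∏ i ∈ s, g i) := by
  induction s using Finset.cons_induction with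
  | empty => simpa using Hh_one
  | cons i s hi ih =>
      rw [Finset.prod_cons, Finset.sum_cons]
      exact Hh_mul (h i (Finset.mem_cons_self i s)) (ih fun j hj => h j (Finset.mem_cons_of_mem hj))

lemma Hh_C (c : ℂ) : Hh w 0 (MvPowerSeries.C (σ := Fin n) (R := ℂ) c) := by
  intro α hα
  rw [MvPowerSeries.coeff_C, if_neg]
  intro h0
  exact hα (by simp [h0, Wt])

lemma Hh_algebraMap (c : ℂ) : Hh w 0 (algebraMap ℂ (MvPowerSeries (Fin n) ℂ) c) := by
  rw [MvPowerSeries.algebraMap_apply]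
  simpa using Hh_C (w := w) c

lemma wOrd_le_iff {e : ℕ} {g : MvPowerSeries (Fin n) ℂ} :
    (e : ℕ∞) ≤ wOrd w g ↔ Q w e g := by
  constructor
  · intro h α hlt
    by_contra hc
    have hmem : ((Wt w α : ℕ) : ℕ∞) ∈
        {m : ℕ∞ | ∃ α : Fin n →₀ ℕ, MvPowerSeries.coeff α g ≠ 0 ∧ m = (∑ i, w i * α i : ℕ)} :=
      ⟨α, hc, rfl⟩
    have h2 : (e : ℕ∞) ≤ ((Wt w α : ℕ) : ℕ∞) := le_trans h (sInf_le hmem)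
    exact absurd (Nat.cast_le.mp h2) (not_le.mpr hlt)
  · intro hQ
    apply le_sInf
    rintro b ⟨α, hα, rfl⟩
    exact_mod_cast Nat.cast_le.mpr (not_lt.mp (fun hlt => hα (hQ α hlt)))

lemma wOrd_lt_iff {e : ℕ} {g : MvPowerSeries (Fin n) ℂ} :
    (e : ℕ∞) < wOrd w g ↔ Q w (e + 1) g := by
  rw [← wOrd_le_iff, Nat.cast_add, Nat.cast_one]
  exact (ENat.add_one_le_iff (ENat.coe_ne_top e)).symm

lemma coeff_ppart {e : ℕ} (g : MvPowerSeries (Fin n) ℂ) (α : Fin n →₀ ℕ) :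
    MvPowerSeries.coeff α (ppart w e g)
      = if Wt w α = e then MvPowerSeries.coeff α g else 0 := by
  rw [MvPowerSeries.coeff_apply]; rfl

lemma Hh_ppart {e : ℕ} (g : MvPowerSeries (Fin n) ℂ) : Hh w e (ppart w e g) := by
  intro α hα
  rw [coeff_ppart, if_neg hα]

lemma Q_ppart {e : ℕ} (g : MvPowerSeries (Fin n) ℂ) : Q w e (ppart w e g) := by
  intro α hα
  rw [coeff_ppart, if_neg (by omega)]

lemma Q_sub_ppart {e : ℕ} {g : MvPowerSeries (Fin n) ℂ} (hg : Q w e g) :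
    Q w (e + 1) (g - ppart w e g) := by
  intro α hα
  rw [map_sub, coeff_ppart]
  by_cases h : Wt w α = e
  · rw [if_pos h, sub_self]
  · rw [if_neg h, sub_zero]
    exact hg α (by omega)

lemma ppart_eq_of {e : ℕ} {g h : MvPowerSeries (Fin n) ℂ}
    (h1 : Q w (e + 1) (g - h)) (h2 : Hh w e h) : ppart w e g = h := by
  apply MvPowerSeries.ext
  intro α
  rw [coeff_ppart]
  by_cases hα : Wt w α = e
  · rw [if_pos hα]
    have := h1 α (by omega)
    rw [map_sub, sub_eq_zero] at this
    exact this
  · rw [if_neg hα, (h2 α hα).symm]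

lemma coe_as_aeval (q : MvPolynomial (Fin n) ℂ) :
    (q : MvPowerSeries (Fin n) ℂ) = MvPolynomial.aeval (fun i => MvPowerSeries.X i) q := by
  have h2 : ∀ r : MvPolynomial (Fin n) ℂ,
      (MvPolynomial.coeToMvPowerSeries.algHom (σ := Fin n) (R := ℂ) ℂ) r = ↑r := by
    intro r
    rw [MvPolynomial.coeToMvPowerSeries.algHom_apply]
    simp [Algebra.algebraMap_self, MvPowerSeries.map_id]
  have h := MvPolynomial.aeval_unique
    (MvPolynomial.coeToMvPowerSeries.algHom (σ := Fin n) (R := ℂ) ℂ)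
  have h3 : (⇑(MvPolynomial.coeToMvPowerSeries.algHom (σ := Fin n) (R := ℂ) ℂ)) ∘ MvPolynomial.X
      = fun i => MvPowerSeries.X (R := ℂ) i := by
    funext i
    simp only [Function.comp_apply, h2, MvPolynomial.coe_X]
  calc (q : MvPowerSeries (Fin n) ℂ)
      = (MvPolynomial.coeToMvPowerSeries.algHom (σ := Fin n) (R := ℂ) ℂ) q := (h2 q).symm
    _ = MvPolynomial.aeval (fun i => MvPowerSeries.X i) q := by rw [h, h3]

lemma phi_as_aeval (φ : MvPowerSeries (Fin n) ℂ ≃ₐ[ℂ] MvPowerSeries (Fin n) ℂ)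
    (q : MvPolynomial (Fin n) ℂ) :
    φ (q : MvPowerSeries (Fin n) ℂ)
      = MvPolynomial.aeval (fun i => φ (MvPowerSeries.X i)) q := by
  rw [coe_as_aeval q]
  have := MvPolynomial.comp_aeval_apply
    (f := fun i => MvPowerSeries.X (σ := Fin n) (R := ℂ) i) φ.toAlgHom q
  simpa using this

lemma Wt_eq_sum_support (β : Fin n →₀ ℕ) :
    ∑ i ∈ β.support, w i * β i = Wt w β :=
  Finset.sum_subset (Finset.subset_univ _)
    (fun i _ hi => by rw [Finsupp.notMem_support_iff.mp hi, mul_zero])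

lemma Q_aeval_monomial
    (Φ : Fin n → MvPowerSeries (Fin n) ℂ) (hΦ : ∀ i, Q w (w i) (Φ i)) (β : Fin n →₀ ℕ) :
    Q w (Wt w β) (MvPolynomial.aeval Φ (MvPolynomial.monomial β (1 : ℂ))) := by
  rw [MvPolynomial.aeval_monomial, map_one, one_mul]
  have : (Finsupp.prod β fun i k => Φ i ^ k) = ∏ i ∈ β.support, Φ i ^ β i := rfl
  rw [this, ← Wt_eq_sum_support]
  exact Q_prod fun i _ => Q_pow (hΦ i) (β i)

lemma Q_map (hw : ∀ i, 0 < w i)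
    (φ : MvPowerSeries (Fin n) ℂ ≃ₐ[ℂ] MvPowerSeries (Fin n) ℂ)
    (hφ : ∀ i, Q w (w i) (φ (MvPowerSeries.X i)))
    {e : ℕ} {g : MvPowerSeries (Fin n) ℂ} (hg : Q w e g) : Q w e (φ g) := by
  classical
  set C : Fin n →₀ ℕ := Finsupp.equivFunOnFinite.symm (fun _ => e) with hCdef
  have hCapp : ∀ i, C i = e := fun i => rfl
  have key : ∀ α : Fin n →₀ ℕ, e ≤ Wt w α → e ≤ Wt w (α ⊓ C) := by
    intro α h
    by_cases hall : ∀ i, α i ≤ e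
    · have hE : α ⊓ C = α := by
        ext i
        rw [Finsupp.inf_apply, hCapp]
        exact min_eq_left (hall i)
      rw [hE]; exact h
    · push_neg at hall
      obtain ⟨i, hi⟩ := hall
      have h1 : (α ⊓ C) i = e := by
        rw [Finsupp.inf_apply, hCapp]
        omega
      calc e = 1 * e := (one_mul e).symm
        _ ≤ w i * (α ⊓ C) i := by rw [h1]; exact Nat.mul_le_mul_right _ (hw i)
        _ ≤ Wt w (α ⊓ C) :=
            Finset.single_le_sum (f := fun j => w j * (α ⊓ C) j)
              (fun j _ => Nat.zero_le _) (Finset.mem_univ i)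
  set gb : (Fin n →₀ ℕ) → MvPowerSeries (Fin n) ℂ :=
    fun β γ => if (β + γ) ⊓ C = β then MvPowerSeries.coeff (β + γ) g else 0 with hgbdef
  have coeff_gb : ∀ β γ, MvPowerSeries.coeff γ (gb β)
      = if (β + γ) ⊓ C = β then MvPowerSeries.coeff (β + γ) g else 0 := by
    intro β γ
    rw [MvPowerSeries.coeff_apply]
  have decomp : g = ∑ β ∈ Finset.Iic C, MvPowerSeries.monomial β 1 * gb β := by
    apply MvPowerSeries.ext
    intro α
    rw [map_sum]
    by_cases hα : Wt w α < e
    · rw [hg α hα]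
      symm
      apply Finset.sum_eq_zero
      intro β hβ
      rw [MvPowerSeries.coeff_monomial_mul]
      split
      · next hle =>
          rw [one_mul, coeff_gb, add_tsub_cancel_of_le hle]
          split
          · exact hg α hα
          · rfl
      · rfl
    · push_neg at hα
      rw [Finset.sum_eq_single (α ⊓ C)]
      · rw [MvPowerSeries.coeff_monomial_mul, if_pos inf_le_left, one_mul, coeff_gb,
          add_tsub_cancel_of_le inf_le_left, if_pos rfl]
      · intro β hβ hne
        rw [MvPowerSeries.coeff_monomial_mul]
        split
        · next hle =>
            rw [one_mul, coeff_gb, add_tsub_cancel_of_le hle, if_neg (fun h => hne h.symm)]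
        · rfl
      · intro habs
        exact absurd (Finset.mem_Iic.mpr inf_le_right) habs
  rw [decomp, map_sum]
  apply Q_sum
  intro β hβ
  rw [map_mul]
  by_cases hb : e ≤ Wt w β
  · apply Q_mono hb
    apply Q_mul_left
    have hmono : (MvPowerSeries.monomial β (1 : ℂ))
        = ((MvPolynomial.monomial β (1 : ℂ) : MvPolynomial (Fin n) ℂ) : MvPowerSeries (Fin n) ℂ) :=
      (MvPolynomial.coe_monomial β (1 : ℂ)).symm
    rw [hmono, phi_as_aeval]
    exact Q_aeval_monomial _ hφ β
  · have hgb0 : gb β = 0 := by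
      apply MvPowerSeries.ext
      intro γ
      rw [coeff_gb, map_zero]
      split
      · next hc =>
          by_contra hnz
          have h2 : e ≤ Wt w (β + γ) := not_lt.mp (fun hl => hnz (hg _ hl))
          have h3 := key _ h2
          rw [hc] at h3
          exact hb h3
      · rfl
    rw [hgb0, map_zero, mul_zero]
    exact Q_zero e

end SQHAux

open SQHAux in
/-- If `f = f₀ + f₁` is semiquasihomogeneous of degree `d` (with `f₀` a quasihomogeneous
polynomial of degree `d` and `deg f₁ > d`) and `φ` is an automorphism of degree `≥ 0`,
then `φ(f)` is again semiquasihomogeneous of degree `d` with principal part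
`φ₀(f₀)`, where `φ₀` is the quasihomogeneous part of `φ`; if moreover `deg φ > 0`,
the principal part of `φ(f)` is `f₀` itself. -/
theorem principal_part_under_automorphism (n : ℕ) (w : Fin n → ℕ) (d : ℕ)
    (hw : ∀ i, 0 < w i)
    (f₀ : MvPolynomial (Fin n) ℂ)
    (hqh : ∀ α ∈ f₀.support, ∑ i, w i * α i = d)
    (f₁ : MvPowerSeries (Fin n) ℂ) (hf₁ : (d : ℕ∞) < wOrd w f₁)
    (φ : MvPowerSeries (Fin n) ℂ ≃ₐ[ℂ] MvPowerSeries (Fin n) ℂ)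
    (hφ : ∀ i, (w i : ℕ∞) ≤ wOrd w (φ (MvPowerSeries.X i) - MvPowerSeries.X i)) :
    ppart w d (φ ((f₀ : MvPowerSeries (Fin n) ℂ) + f₁))
        = MvPolynomial.aeval (fun i => ppart w (w i) (φ (MvPowerSeries.X i))) f₀ ∧
    (d : ℕ∞) < wOrd w (φ ((f₀ : MvPowerSeries (Fin n) ℂ) + f₁)
        - ppart w d (φ ((f₀ : MvPowerSeries (Fin n) ℂ) + f₁))) ∧
    ((∀ i, (w i : ℕ∞) < wOrd w (φ (MvPowerSeries.X i) - MvPowerSeries.X i)) →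
      ppart w d (φ ((f₀ : MvPowerSeries (Fin n) ℂ) + f₁)) = (f₀ : MvPowerSeries (Fin n) ℂ)) := by
  classical
  have hqh' : ∀ β ∈ f₀.support, Wt w β = d := hqh
  -- Q for every φ(Xᵢ)
  have hQX : ∀ i, Q w (w i) (MvPowerSeries.X (R := ℂ) i) := by
    intro i α hα
    rw [MvPowerSeries.coeff_X, if_neg]
    intro h
    rw [h, Wt_single] at hα
    exact lt_irrefl _ hα
  have hφQ : ∀ i, Q w (w i) (φ (MvPowerSeries.X i)) := by
    intro i
    have h1 : Q w (w i) (φ (MvPowerSeries.X i) - MvPowerSeries.X i) := wOrd_le_iff.mp (hφ i)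
    have h2 := Q_add h1 (hQX i)
    simpa using h2
  have hQf₁ : Q w (d + 1) f₁ := wOrd_lt_iff.mp hf₁
  have hQφf₁ : Q w (d + 1) (φ f₁) := Q_map hw φ hφQ hQf₁
  set p : Fin n → MvPowerSeries (Fin n) ℂ :=
    fun i => ppart w (w i) (φ (MvPowerSeries.X i)) with hpdef
  have hHhp : ∀ i, Hh w (w i) (p i) := fun i => Hh_ppart _
  have hQp : ∀ i, Q w (w i) (p i) := fun i => Q_ppart _
  have hQd : ∀ i, Q w (w i + 1) (φ (MvPowerSeries.X i) - p i) := fun i => Q_sub_ppart (hφQ i)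
  -- quasihomogeneity of aeval p f₀
  have hHh : Hh w d (MvPolynomial.aeval p f₀) := by
    rw [MvPolynomial.aeval_def, MvPolynomial.eval₂_eq]
    apply Hh_sum
    intro β hβ
    have hterm : Hh w (0 + d)
        (algebraMap ℂ (MvPowerSeries (Fin n) ℂ) (MvPolynomial.coeff β f₀)
          * ∏ i ∈ β.support, p i ^ β i) := by
      apply Hh_mul (Hh_algebraMap _)
      have h := Hh_prod (s := β.support) (a := fun i => w i * β i) (g := fun i => p i ^ β i)
        (fun i _ => Hh_pow (hHhp i) (β i))
      rwa [Wt_eq_sum_support, hqh' β hβ] at h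
    simpa using hterm
  -- the difference of the two aevals has high order
  have hmain : Q w (d + 1)
      (MvPolynomial.aeval (fun i => φ (MvPowerSeries.X i)) f₀ - MvPolynomial.aeval p f₀) := by
    rw [MvPolynomial.aeval_def, MvPolynomial.aeval_def, MvPolynomial.eval₂_eq,
      MvPolynomial.eval₂_eq, ← Finset.sum_sub_distrib]
    apply Q_sum
    intro β hβ
    rw [← mul_sub]
    have hq : Q w (0 + (d + 1))
        (algebraMap ℂ (MvPowerSeries (Fin n) ℂ) (MvPolynomial.coeff β f₀)
          * (∏ i ∈ β.support, (φ (MvPowerSeries.X i)) ^ β i - ∏ i ∈ β.support, p i ^ β i)) := by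
      apply Q_mul (Q_zero' _)
      have h := Q_prod_sub (s := β.support) (a := fun i => w i * β i)
        (g := fun i => (φ (MvPowerSeries.X i)) ^ β i) (g' := fun i => p i ^ β i)
        (fun i _ => Q_pow (hφQ i) (β i)) (fun i _ => Q_pow (hQp i) (β i))
        (fun i _ => Q_pow_sub (hφQ i) (hQp i) (hQd i) (β i))
      rwa [Wt_eq_sum_support, hqh' β hβ] at h
    simpa using hq
  have haeval : φ ((f₀ : MvPowerSeries (Fin n) ℂ) + f₁)
      = MvPolynomial.aeval (fun i => φ (MvPowerSeries.X i)) f₀ + φ f₁ := by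
    rw [map_add, phi_as_aeval]
  have hQGP : Q w (d + 1)
      (φ ((f₀ : MvPowerSeries (Fin n) ℂ) + f₁) - MvPolynomial.aeval p f₀) := by
    rw [haeval, add_sub_right_comm]
    exact Q_add hmain hQφf₁
  have hpp : ppart w d (φ ((f₀ : MvPowerSeries (Fin n) ℂ) + f₁)) = MvPolynomial.aeval p f₀ :=
    ppart_eq_of hQGP hHh
  refine ⟨hpp, ?_, ?_⟩
  · rw [hpp]
    exact wOrd_lt_iff.mpr hQGP
  · intro hstrict
    have hpX : ∀ i, p i = MvPowerSeries.X i := by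
      intro i
      have hs : Q w (w i + 1) (φ (MvPowerSeries.X i) - MvPowerSeries.X i) :=
        wOrd_lt_iff.mp (hstrict i)
      apply MvPowerSeries.ext
      intro α
      show MvPowerSeries.coeff α (ppart w (w i) (φ (MvPowerSeries.X i)))
        = MvPowerSeries.coeff α (MvPowerSeries.X i)
      rw [coeff_ppart]
      by_cases hα : Wt w α = w i
      · rw [if_pos hα]
        have h := hs α (by omega)
        rw [map_sub, sub_eq_zero] at h
        exact h
      · rw [if_neg hα, MvPowerSeries.coeff_X,
          if_neg (show α ≠ Finsupp.single i 1 from fun h => hα (by rw [h]; exact Wt_single w i))]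
    rw [hpp]
    have hpeq : p = fun i => MvPowerSeries.X (R := ℂ) i := funext hpX
    rw [hpeq]
    exact (coe_as_aeval f₀).symm
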